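/- Let G be a finite group and S a product-one free sequence over G (i.e., no nonempty subsequence of S has 1 among its products). Then the set Π(S) of all products of nonempty subsequences of S has cardinality at least |S|. -/

import Mathlib

/-- The set of products of a sequence (multiset) `S` over all orderings. -/
def piSet {G : Type*} [Group G] (S : Multiset G) : Set G :=
  {g | ∃ l : List G, (l : Multiset G) = S ∧ l.prod = g}

/-- The set `Π(S)` of all products of nonempty subsequences of `S`. -/
def subProds {G : Type*} [Group G] (S : Multiset G) : Set G :=
  {g | ∃ T : Multiset G, T ≤ S ∧ T ≠ 0 ∧ g ∈ piSet T}

lemma subProds_mono {G : Type*} [Group G] {S S' : Multiset G} (hS : S ≤ S') :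
    subProds S ⊆ subProds S' := by
  rintro g ⟨T, hT, hne, hg⟩
  exact ⟨T, hT.trans hS, hne, hg⟩

lemma self_mem_subProds {G : Type*} [Group G] (a : G) (S : Multiset G) :
    a ∈ subProds (a ::ₘ S) := by
  refine ⟨{a}, ?_, by simp, [a], by simp, by simp⟩
  · exact (Multiset.cons_le_cons a (zero_le : (0 : Multiset G) ≤ S))

lemma mul_mem_subProds {G : Type*} [Group G] {a x : G} {S : Multiset G}
    (hx : x ∈ subProds S) : a * x ∈ subProds (a ::ₘ S) := by
  obtain ⟨T, hT, hne, l, hl, hprod⟩ := hx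
  refine ⟨a ::ₘ T, Multiset.cons_le_cons a hT, Multiset.cons_ne_zero, a :: l, ?_, ?_⟩
  · rw [← hl]; rfl
  · rw [List.prod_cons, hprod]

lemma subProds_finite {G : Type*} [Group G] [Finite G] (S : Multiset G) :
    (subProds S).Finite := Set.toFinite _

theorem stmt_7 {G : Type*} [Group G] [Finite G] (S : Multiset G)
    (h : (1 : G) ∉ subProds S) :
    Multiset.card S ≤ Nat.card (subProds S) := by
  induction S using Multiset.induction with
  | empty => simp
  | cons a S ih =>
    have hmono : subProds S ⊆ subProds (a ::ₘ S) :=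
      subProds_mono (Multiset.le_cons_self S a)
    have h1 : (1 : G) ∉ subProds S := fun hx => h (hmono hx)
    have ihc := ih h1
    have hssub : subProds S ⊂ subProds (a ::ₘ S) := by
      refine ⟨hmono, fun hsup => ?_⟩
      have heq : subProds S = subProds (a ::ₘ S) := le_antisymm hmono hsup
      -- left mult by a maps subProds S into itself, injectively
      have hmaps : Set.MapsTo (fun x => a * x) (subProds S) (subProds S) := by
        intro x hx
        rw [heq]
        exact mul_mem_subProds hx
      have hinj : Set.InjOn (fun x => a * x) (subProds S) :=
        (mul_right_injective a).injOn
      have hbij : Set.BijOn (fun x => a * x) (subProds S) (subProds S) :=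
        ((subProds_finite S).injOn_iff_bijOn_of_mapsTo hmaps).mp hinj
      have ha : a ∈ subProds S := heq ▸ self_mem_subProds a S
      obtain ⟨x, hxmem, hxa⟩ := hbij.surjOn ha
      have : x = 1 := by
        have : a * x = a := hxa
        simpa using mul_left_cancel (a := a) (by simpa using this)
      exact h1 (this ▸ hxmem)
    have hlt : Nat.card (subProds S) < Nat.card (subProds (a ::ₘ S)) := by
      rw [Nat.card_coe_set_eq, Nat.card_coe_set_eq]
      exact Set.ncard_lt_ncard hssub (subProds_finite _)
    simpa [Multiset.card_cons] using Nat.succ_le_of_lt (lt_of_le_of_lt ihc hlt)
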